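/- arXiv:2005.07386 — 2 statements merged into one kernel-verified Lean document; each statement's English description precedes it below -/
import Mathlib

section
/- Let ℏ, n, m be positive integers, let {t_j}_{j∈ℕ} be a periodic sequence of impulse instants, let P ∈ ℝ^{n×n}, Q₁, …, Q_ℏ ∈ ℝ^{n×m}, and let λ₁ > 0 be a real number. Assume: (a) there exists k∗ ∈ ℕ⁺ such that the rank condition at level k∗ holds; (b) every ρ ∈ σ(P) satisfies Re(ρ) ≤ λ₁. Then for every η ∈ ℝⁿ there exist k ∈ ℕ⁺ and vectors ξ₁, …, ξ_k ∈ ℝ^m with ‖ξ_j‖ ≤ 1 for each j such that η = Σ_{j=1}^{k} e^{(λ₁ I_n − P) t_j} Q_{ν(j)} ξ_j. In other words, the set F = ∪_{k∈ℕ⁺} { Σ_{j=1}^{k} e^{(λ₁ I_n − P) t_j} Q_{ν(j)} ξ_j : ξ_j ∈ ℝ^m, ‖ξ_j‖ ≤ 1 } equals all of ℝⁿ. -/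
open Matrix Finset

/-- `mexp t M = e^{M t}`, the matrix exponential. -/
noncomputable def mexp {n : ℕ} (t : ℝ) (M : Matrix (Fin n) (Fin n) ℝ) : Matrix (Fin n) (Fin n) ℝ :=
  NormedSpace.exp (t • M)

/-- Action of a rectangular matrix on Euclidean space (so that `‖·‖` is the Euclidean norm). -/
noncomputable def act {n m : ℕ} (M : Matrix (Fin n) (Fin m) ℝ)
    (v : EuclideanSpace ℝ (Fin m)) : EuclideanSpace ℝ (Fin n) :=
  Matrix.toEuclideanLin M v

/-- `nu h j` is the unique index in `{1,…,h}` congruent to `j` modulo `h`. -/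
def nu (h j : ℕ) : ℕ := if j % h = 0 then h else j % h

open Filter

section acts
variable {n m k : ℕ}

lemma act_apply (M : Matrix (Fin n) (Fin m) ℝ) (v : EuclideanSpace ℝ (Fin m)) :
    act M v = (WithLp.equiv 2 (Fin n → ℝ)).symm (M *ᵥ (WithLp.equiv 2 (Fin m → ℝ)) v) := by
  simp [act, Matrix.toEuclideanLin_apply]

lemma act_mul (X : Matrix (Fin n) (Fin k) ℝ) (Y : Matrix (Fin k) (Fin m) ℝ)
    (v : EuclideanSpace ℝ (Fin m)) : act (X * Y) v = act X (act Y v) := by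
  simp [act_apply, Matrix.mulVec_mulVec]

lemma act_smul (M : Matrix (Fin n) (Fin m) ℝ) (c : ℝ) (v : EuclideanSpace ℝ (Fin m)) :
    act M (c • v) = c • act M v := by
  simp [act]

lemma act_smul_mat (M : Matrix (Fin n) (Fin m) ℝ) (c : ℝ) (v : EuclideanSpace ℝ (Fin m)) :
    act (c • M) v = c • act M v := by
  simp [act]

lemma inner_act (M : Matrix (Fin n) (Fin m) ℝ) (x : EuclideanSpace ℝ (Fin m))
    (u : EuclideanSpace ℝ (Fin n)) :
    inner ℝ (act M x) u = (inner ℝ x (act Mᵀ u) : ℝ) := by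
  have h := Matrix.toEuclideanLin_conjTranspose_eq_adjoint (𝕜 := ℝ) M
  rw [Matrix.conjTranspose_eq_transpose_of_trivial] at h
  rw [act, act, h, LinearMap.adjoint_inner_right]

end acts

section mexps
variable {n : ℕ}

lemma mexp_add (a b : ℝ) (M : Matrix (Fin n) (Fin n) ℝ) :
    mexp (a + b) M = mexp a M * mexp b M := by
  rw [mexp, add_smul]
  exact Matrix.exp_add_of_commute _ _ (Commute.smul_left (Commute.smul_right (Commute.refl M) b) a)

lemma mexp_nat_mul (p : ℕ) (s : ℝ) (M : Matrix (Fin n) (Fin n) ℝ) :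
    mexp (p * s) M = (mexp s M) ^ p := by
  have h : ((p : ℝ) * s) • M = p • (s • M) := by
    rw [← Nat.cast_smul_eq_nsmul ℝ p (s • M), smul_smul]
  rw [mexp, mexp, h, Matrix.exp_nsmul]

lemma mexp_transpose (s : ℝ) (M : Matrix (Fin n) (Fin n) ℝ) :
    (mexp s M)ᵀ = mexp s Mᵀ := by
  rw [mexp, mexp, ← Matrix.transpose_smul, Matrix.exp_transpose]

lemma mexp_lam_sub (s lam : ℝ) (P : Matrix (Fin n) (Fin n) ℝ) :
    mexp s (lam • (1 : Matrix (Fin n) (Fin n) ℝ) - P)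
      = Real.exp (lam * s) • mexp (-s) P := by
  letI : SeminormedRing (Matrix (Fin n) (Fin n) ℝ) := Matrix.linftyOpSemiNormedRing
  letI : NormedRing (Matrix (Fin n) (Fin n) ℝ) := Matrix.linftyOpNormedRing
  letI : NormedAlgebra ℝ (Matrix (Fin n) (Fin n) ℝ) := Matrix.linftyOpNormedAlgebra
  have h1 : s • (lam • (1 : Matrix (Fin n) (Fin n) ℝ) - P)
      = (lam * s) • (1 : Matrix (Fin n) (Fin n) ℝ) + (-s) • P := by
    rw [smul_sub, smul_smul]; ring_nf; rw [neg_smul]; abel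
  rw [mexp, h1]
  have hc : Commute ((lam * s) • (1 : Matrix (Fin n) (Fin n) ℝ)) ((-s) • P) :=
    Commute.smul_left (Commute.smul_right (Commute.one_left P) _) _
  rw [Matrix.exp_add_of_commute _ _ hc]
  have h2 : (lam * s) • (1 : Matrix (Fin n) (Fin n) ℝ) = algebraMap ℝ _ (lam * s) := by
    rw [Algebra.algebraMap_eq_smul_one]
  erw [h2, ← (NormedSpace.algebraMap_exp_comm (𝕂 := ℝ) (𝔸 := Matrix (Fin n) (Fin n) ℝ) (lam * s) :
    algebraMap ℝ (Matrix (Fin n) (Fin n) ℝ) (NormedSpace.exp (lam * s))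
      = NormedSpace.exp (algebraMap ℝ (Matrix (Fin n) (Fin n) ℝ) (lam * s))), ← Real.exp_eq_exp_ℝ, Algebra.algebraMap_eq_smul_one,
    smul_mul_assoc, one_mul, mexp]

end mexps

lemma solve {n m : ℕ} (k : ℕ) (M : ℕ → Matrix (Fin n) (Fin m) ℝ) (η : EuclideanSpace ℝ (Fin n))
    (c : ℝ) (hc : 0 < c) (hcη : ‖η‖ ^ 2 ≤ c)
    (hlb : ∀ u : EuclideanSpace ℝ (Fin n), c * ‖u‖ ^ 2 ≤ ∑ j ∈ Icc 1 k, ‖act (M j)ᵀ u‖ ^ 2) :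
    ∃ ξ : ℕ → EuclideanSpace ℝ (Fin m), (∀ j, ‖ξ j‖ ≤ 1) ∧
      η = ∑ j ∈ Icc 1 k, act (M j) (ξ j) := by
  classical
  set T : EuclideanSpace ℝ (Fin n) →ₗ[ℝ] EuclideanSpace ℝ (Fin n) :=
    ∑ j ∈ Icc 1 k, (Matrix.toEuclideanLin (M j)).comp (Matrix.toEuclideanLin (M j)ᵀ) with hT
  have hTapp : ∀ u, T u = ∑ j ∈ Icc 1 k, act (M j) (act (M j)ᵀ u) := by
    intro u; rw [hT]; simp [act, LinearMap.sum_apply]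
  have hinner : ∀ u, (inner ℝ u (T u) : ℝ) = ∑ j ∈ Icc 1 k, ‖act (M j)ᵀ u‖ ^ 2 := by
    intro u
    rw [hTapp, inner_sum]
    refine Finset.sum_congr rfl fun j _ => ?_
    rw [real_inner_comm, inner_act, real_inner_self_eq_norm_sq]
  have hinj : Function.Injective T := by
    rw [← LinearMap.ker_eq_bot, LinearMap.ker_eq_bot']
    intro u hu
    have h1 : (inner ℝ u (T u) : ℝ) = 0 := by rw [hu, inner_zero_right]
    have h2 := hlb u
    rw [← hinner, h1] at h2
    have : ‖u‖ ^ 2 ≤ 0 := by nlinarith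
    have : ‖u‖ = 0 := by nlinarith [norm_nonneg u, sq_nonneg ‖u‖]
    exact norm_eq_zero.mp this
  have hsurj : Function.Surjective T := LinearMap.surjective_of_injective hinj
  obtain ⟨y, hy⟩ := hsurj η
  set ξ : ℕ → EuclideanSpace ℝ (Fin m) :=
    fun j => if j ∈ Icc 1 k then act (M j)ᵀ y else 0 with hξ
  have hξeq : ∀ j ∈ Icc 1 k, ξ j = act (M j)ᵀ y := fun j hj => if_pos hj
  have hkey : (inner ℝ y η : ℝ) = ∑ j ∈ Icc 1 k, ‖ξ j‖ ^ 2 := by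
    rw [← hy, hinner]
    exact Finset.sum_congr rfl fun j hj => by rw [hξeq j hj]
  have hIη : (inner ℝ y η : ℝ) ≤ ‖y‖ * ‖η‖ := real_inner_le_norm y η
  have hIc : c * ‖y‖ ^ 2 ≤ (inner ℝ y η : ℝ) := by
    rw [← hy, hinner]; exact hlb y
  have hynorm : ‖y‖ ≤ ‖η‖ / c := by
    rcases eq_or_lt_of_le (norm_nonneg y) with h0 | h0
    · rw [← h0]; positivity
    · rw [le_div_iff₀ hc]
      nlinarith
  have hbound : ∀ j, ‖ξ j‖ ≤ 1 := by
    intro j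
    by_cases hj : j ∈ Icc 1 k
    · have h1 : ‖ξ j‖ ^ 2 ≤ ∑ i ∈ Icc 1 k, ‖ξ i‖ ^ 2 := by
        exact Finset.single_le_sum (fun i _ => sq_nonneg ‖ξ i‖) hj
      have h2 : ‖ξ j‖ ^ 2 ≤ ‖η‖ * ‖η‖ / c := by
        calc ‖ξ j‖ ^ 2 ≤ (inner ℝ y η : ℝ) := by rw [hkey]; exact h1
        _ ≤ ‖y‖ * ‖η‖ := hIη
        _ ≤ (‖η‖ / c) * ‖η‖ := by
            apply mul_le_mul_of_nonneg_right hynorm (norm_nonneg η)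
        _ = ‖η‖ * ‖η‖ / c := by ring
      have h3 : ‖ξ j‖ ^ 2 ≤ 1 := by
        have : ‖η‖ * ‖η‖ / c ≤ 1 := by
          rw [div_le_one hc]; nlinarith
        linarith
      nlinarith [norm_nonneg (ξ j)]
    · have h0 : ξ j = 0 := if_neg hj
      rw [h0]; simp
  refine ⟨ξ, hbound, ?_⟩
  rw [← hy, hTapp]
  exact Finset.sum_congr rfl fun j hj => by rw [hξeq j hj]


lemma sum_unbounded (a : ℕ → ℝ) (ha : ∀ p, 0 ≤ a p) (δ : ℝ) (hδ : 0 < δ)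
    (hfreq : ∀ N, ∃ p, N ≤ p ∧ δ ≤ a p) (R : ℝ) :
    ∃ N : ℕ, R ≤ ∑ p ∈ range N, a p := by
  classical
  have hinf : {p : ℕ | δ ≤ a p}.Infinite := by
    by_contra hfin
    rw [Set.not_infinite] at hfin
    obtain ⟨b, hb⟩ := hfin.bddAbove
    obtain ⟨p, hp1, hp2⟩ := hfreq (b + 1)
    have : p ≤ b := hb hp2
    omega
  obtain ⟨s, hs, hcard⟩ := hinf.exists_subset_card_eq ⌈R / δ⌉₊
  rcases s.eq_empty_or_nonempty with rfl | hne
  · refine ⟨0, ?_⟩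
    simp only [range_zero, sum_empty]
    have h0 : ⌈R / δ⌉₊ = 0 := by rw [← hcard]; simp
    have h1 : R / δ ≤ 0 := Nat.ceil_eq_zero.mp h0
    have h2 := mul_le_mul_of_nonneg_right h1 hδ.le
    rwa [div_mul_cancel₀ _ (ne_of_gt hδ), zero_mul] at h2
  · obtain ⟨b, hbmax⟩ := s.bddAbove
    refine ⟨b + 1, ?_⟩
    have hsub : s ⊆ range (b + 1) := by
      intro x hx; rw [mem_range]; exact Nat.lt_succ_of_le (hbmax hx)
    calc R ≤ δ * ⌈R / δ⌉₊ := by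
            rw [← div_le_iff₀' hδ]; exact Nat.le_ceil _
      _ = ∑ _p ∈ s, δ := by rw [sum_const, hcard, nsmul_eq_mul, mul_comm]
      _ ≤ ∑ p ∈ s, a p := Finset.sum_le_sum fun p hp => hs hp
      _ ≤ ∑ p ∈ range (b + 1), a p := Finset.sum_le_sum_of_subset_of_nonneg hsub
          (fun p _ _ => ha p)

lemma uniform_sphere {n : ℕ} (F : ℕ → EuclideanSpace ℝ (Fin n) → ℝ)
    (hcont : ∀ k, Continuous (F k))
    (hmono : ∀ k k', k ≤ k' → ∀ u, F k u ≤ F k' u)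
    (hpt : ∀ u : EuclideanSpace ℝ (Fin n), ‖u‖ = 1 → ∀ R : ℝ, ∃ k, R < F k u) (R : ℝ) :
    ∃ k, ∀ u : EuclideanSpace ℝ (Fin n), ‖u‖ = 1 → R ≤ F k u := by
  classical
  set U : ℕ → Set (EuclideanSpace ℝ (Fin n)) := fun k => {u | R < F k u} with hU
  have hopen : ∀ k, IsOpen (U k) := fun k => isOpen_lt continuous_const (hcont k)
  have hcover : Metric.sphere (0 : EuclideanSpace ℝ (Fin n)) 1 ⊆ ⋃ k, U k := by
    intro u hu
    rw [mem_sphere_iff_norm, sub_zero] at hu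
    obtain ⟨k, hk⟩ := hpt u hu R
    exact Set.mem_iUnion.mpr ⟨k, hk⟩
  obtain ⟨s, hscover⟩ := (isCompact_sphere (0 : EuclideanSpace ℝ (Fin n)) 1).elim_finite_subcover
    U hopen hcover
  rcases s.eq_empty_or_nonempty with rfl | hne
  · refine ⟨0, fun u hu => ?_⟩
    exfalso
    have : u ∈ ⋃ k ∈ (∅ : Finset ℕ), U k := hscover (by
      rw [mem_sphere_iff_norm, sub_zero]; exact hu)
    simpa using this
  · obtain ⟨K, hK⟩ := s.exists_max_image id hne
    refine ⟨K, fun u hu => ?_⟩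
    have : u ∈ ⋃ k ∈ s, U k := hscover (by rw [mem_sphere_iff_norm, sub_zero]; exact hu)
    rw [Set.mem_iUnion₂] at this
    obtain ⟨k, hks, hk⟩ := this
    exact le_of_lt (lt_of_lt_of_le hk (hmono k K (hK.2 k hks) u))


lemma map_ofReal_exp {n : ℕ} (D : Matrix (Fin n) (Fin n) ℝ) :
    (NormedSpace.exp D).map Complex.ofReal = NormedSpace.exp (D.map Complex.ofReal) := by
  letI : SeminormedRing (Matrix (Fin n) (Fin n) ℝ) := Matrix.linftyOpSemiNormedRing
  letI : NormedRing (Matrix (Fin n) (Fin n) ℝ) := Matrix.linftyOpNormedRing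
  letI : NormedAlgebra ℝ (Matrix (Fin n) (Fin n) ℝ) := Matrix.linftyOpNormedAlgebra
  letI : SeminormedRing (Matrix (Fin n) (Fin n) ℂ) := Matrix.linftyOpSemiNormedRing
  letI : NormedRing (Matrix (Fin n) (Fin n) ℂ) := Matrix.linftyOpNormedRing
  letI : NormedAlgebra ℝ (Matrix (Fin n) (Fin n) ℂ) := Matrix.linftyOpNormedAlgebra
  letI : NormedAlgebra ℚ (Matrix (Fin n) (Fin n) ℝ) := NormedAlgebra.restrictScalars ℚ ℝ _
  have hcont : Continuous (Complex.ofRealHom.mapMatrix :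
      Matrix (Fin n) (Fin n) ℝ →+* Matrix (Fin n) (Fin n) ℂ) := by
    apply continuous_pi
    intro i
    apply continuous_pi
    intro j
    exact Complex.continuous_ofReal.comp ((continuous_apply j).comp (continuous_apply i))
  have h := NormedSpace.map_exp
    (Complex.ofRealHom.mapMatrix : Matrix (Fin n) (Fin n) ℝ →+* Matrix (Fin n) (Fin n) ℂ)
    hcont D
  have h2 : (NormedSpace.exp (D.map Complex.ofReal) : Matrix (Fin n) (Fin n) ℂ)
      = NormedSpace.exp (D.map Complex.ofReal) := by
    rfl
  rw [← h2]
  exact h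

lemma eig_exp {n : ℕ} (D : Matrix (Fin n) (Fin n) ℂ) (v : Fin n → ℂ) (ρ : ℂ)
    (hv : D *ᵥ v = ρ • v) : (NormedSpace.exp D) *ᵥ v = Complex.exp ρ • v := by
  letI : SeminormedRing (Matrix (Fin n) (Fin n) ℂ) := Matrix.linftyOpSemiNormedRing
  letI : NormedRing (Matrix (Fin n) (Fin n) ℂ) := Matrix.linftyOpNormedRing
  letI : NormedAlgebra ℂ (Matrix (Fin n) (Fin n) ℂ) := Matrix.linftyOpNormedAlgebra
  have hpow : ∀ k : ℕ, (D ^ k) *ᵥ v = ρ ^ k • v := by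
    intro k
    induction k with
    | zero => simp
    | succ k ih =>
      rw [pow_succ, ← Matrix.mulVec_mulVec, hv, Matrix.mulVec_smul, ih, smul_smul, pow_succ]
      ring_nf
  let L : Matrix (Fin n) (Fin n) ℂ →ₗ[ℂ] (Fin n → ℂ) :=
    { toFun := fun M => M *ᵥ v
      map_add' := fun A B => Matrix.add_mulVec A B v
      map_smul' := fun c M => Matrix.smul_mulVec c M v }
  have hLc : Continuous L := L.continuous_of_finiteDimensional
  let L' : Matrix (Fin n) (Fin n) ℂ →L[ℂ] (Fin n → ℂ) := ⟨L, hLc⟩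
  have hsum : Summable fun k : ℕ => ((k.factorial : ℂ))⁻¹ • D ^ k :=
    NormedSpace.expSeries_summable' (𝕂 := ℂ) D
  have h1 : (NormedSpace.exp D) *ᵥ v = ∑' k : ℕ, ((k.factorial : ℂ))⁻¹ • ((D ^ k) *ᵥ v) := by
    have := L'.map_tsum hsum
    rw [NormedSpace.exp_eq_tsum ℂ]
    simpa [L', L] using this
  rw [h1]
  have h2 : ∀ k : ℕ, ((k.factorial : ℂ))⁻¹ • ((D ^ k) *ᵥ v)
      = (((k.factorial : ℂ))⁻¹ * ρ ^ k) • v := by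
    intro k; rw [hpow, smul_smul]
  simp_rw [h2]
  rw [Summable.tsum_smul_const ?_]
  · congr 1
    rw [Complex.exp_eq_exp_ℂ, NormedSpace.exp_eq_tsum ℂ]
    simp [smul_eq_mul]
  · have := NormedSpace.expSeries_summable' (𝕂 := ℂ) ρ
    simpa [smul_eq_mul] using this

lemma no_decay {n : ℕ} (s lam : ℝ) (hs : 0 < s)
    (P : Matrix (Fin n) (Fin n) ℝ)
    (hspec : ∀ ρ ∈ spectrum ℂ (P.map Complex.ofReal), ρ.re ≤ lam)
    (u : Fin n → ℝ) (hu : u ≠ 0)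
    (h : Tendsto (fun p : ℕ =>
      (((mexp s (lam • (1 : Matrix (Fin n) (Fin n) ℝ) - P))ᵀ) ^ p) *ᵥ u) atTop (nhds 0)) :
    False := by
  classical
  set D : Matrix (Fin n) (Fin n) ℝ := s • (lam • (1 : Matrix (Fin n) (Fin n) ℝ) - P)ᵀ with hD
  have hAD : (mexp s (lam • (1 : Matrix (Fin n) (Fin n) ℝ) - P))ᵀ = NormedSpace.exp D := by
    rw [mexp_transpose, mexp]
  set Dc : Matrix (Fin n) (Fin n) ℂ := D.map Complex.ofReal with hDc
  set Ac : Matrix (Fin n) (Fin n) ℂ := NormedSpace.exp Dc with hAc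
  set uc : Fin n → ℂ := fun i => (u i : ℂ) with huc
  -- complexified powers
  have hpowmap : ∀ p : ℕ, ((NormedSpace.exp D) ^ p).map Complex.ofReal = Ac ^ p := by
    intro p
    have : ((NormedSpace.exp D) ^ p).map Complex.ofReal
        = (Complex.ofRealHom.mapMatrix ((NormedSpace.exp D)) : Matrix (Fin n) (Fin n) ℂ) ^ p := by
      rw [← map_pow]; rfl
    rw [this]
    have : (Complex.ofRealHom.mapMatrix (NormedSpace.exp D) : Matrix (Fin n) (Fin n) ℂ)
        = Ac := by
      show (NormedSpace.exp D).map Complex.ofReal = Ac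
      rw [map_ofReal_exp, hAc]
    rw [this]
  -- the submodule of decaying vectors
  let W : Submodule ℂ (Fin n → ℂ) :=
  { carrier := {v | Tendsto (fun p : ℕ => (Ac ^ p) *ᵥ v) atTop (nhds 0)}
    add_mem' := by
      intro a b ha hb
      have := ha.add hb
      simpa [Matrix.mulVec_add] using this
    zero_mem' := by simpa [Matrix.mulVec_zero] using tendsto_const_nhds
    smul_mem' := by
      intro c a ha
      have := ha.const_smul c
      simpa [Matrix.mulVec_smul] using this }
  have hWmem : ∀ v : Fin n → ℂ, v ∈ W ↔ Tendsto (fun p : ℕ => (Ac ^ p) *ᵥ v) atTop (nhds 0) :=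
    fun v => Iff.rfl
  -- uc ∈ W
  have hucW : uc ∈ W := by
    rw [hWmem]
    rw [tendsto_pi_nhds]
    intro i
    have hcomp : ∀ p : ℕ, (Ac ^ p *ᵥ uc) i
        = (((((NormedSpace.exp D) ^ p)) *ᵥ u) i : ℝ) := by
      intro p
      rw [← hpowmap p]
      simp only [Matrix.mulVec, dotProduct, Matrix.map_apply, huc]
      push_cast
      rfl
    simp_rw [hcomp]
    have hi : Tendsto (fun p : ℕ =>
        ((((mexp s (lam • (1 : Matrix (Fin n) (Fin n) ℝ) - P))ᵀ) ^ p *ᵥ u) i)) atTop (nhds 0) := by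
      have := h.comp (tendsto_id (α := ℕ))
      exact (tendsto_pi_nhds.mp h) i
    rw [hAD] at hi
    have := Complex.continuous_ofReal.continuousAt.tendsto.comp hi
    exact this
  have hucne : uc ≠ 0 := by
    intro hz
    apply hu
    funext i
    have : uc i = 0 := by rw [hz]; rfl
    simpa [huc] using this
  have hWne : W ≠ ⊥ := by
    rw [Submodule.ne_bot_iff]
    exact ⟨uc, hucW, hucne⟩
  -- restrict Ac to W, get eigenvalue μ with ‖μ‖ < 1
  have hWinv : ∀ v ∈ W, Ac.mulVecLin v ∈ W := by
    intro v hv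
    rw [hWmem] at hv ⊢
    have : ∀ p : ℕ, (Ac ^ p) *ᵥ (Ac.mulVecLin v) = (Ac ^ (p + 1)) *ᵥ v := by
      intro p
      rw [Matrix.mulVecLin_apply, Matrix.mulVec_mulVec, ← pow_succ]
    simp_rw [this]
    exact hv.comp (tendsto_add_atTop_nat 1)
  haveI : Nontrivial W := Submodule.nontrivial_iff_ne_bot.mpr hWne
  obtain ⟨μ, hμ⟩ := Module.End.exists_eigenvalue ((Ac.mulVecLin).restrict hWinv)
  obtain ⟨w, hw⟩ := hμ.exists_hasEigenvector
  have hwv : Ac *ᵥ (w : Fin n → ℂ) = μ • (w : Fin n → ℂ) := by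
    have h1 := Module.End.mem_eigenspace_iff.mp hw.1
    have h2 := congrArg (Subtype.val) h1
    simpa [Matrix.mulVecLin_apply] using h2
  have hwne : (w : Fin n → ℂ) ≠ 0 := fun hz => hw.2 (Subtype.coe_injective (by simpa using hz))
  have hwW : (w : Fin n → ℂ) ∈ W := w.2
  have hApoww : ∀ p : ℕ, (Ac ^ p) *ᵥ (w : Fin n → ℂ) = μ ^ p • (w : Fin n → ℂ) := by
    intro p
    induction p with
    | zero => simp
    | succ p ih =>
      rw [pow_succ, ← Matrix.mulVec_mulVec, hwv, Matrix.mulVec_smul, ih, smul_smul, pow_succ]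
      ring_nf
  have hμlt : ‖μ‖ < 1 := by
    by_contra hge
    push_neg at hge
    obtain ⟨i, hi⟩ := Function.ne_iff.mp hwne
    have hwi : (0 : ℝ) < ‖(w : Fin n → ℂ) i‖ := by
      simpa [norm_pos_iff] using hi
    have htend : Tendsto (fun p : ℕ => (μ ^ p • (w : Fin n → ℂ)) i) atTop (nhds 0) := by
      have := (hWmem _).mp hwW
      simp_rw [hApoww] at this
      exact (tendsto_pi_nhds.mp this) i
    have htn := htend.norm
    rw [norm_zero] at htn
    have hev := htn.eventually (eventually_lt_nhds hwi)
    obtain ⟨p, hp⟩ := hev.exists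
    have : ‖(μ ^ p • (w : Fin n → ℂ)) i‖ = ‖μ‖ ^ p * ‖(w : Fin n → ℂ) i‖ := by
      simp [norm_smul, norm_pow]
    rw [this] at hp
    have : (1 : ℝ) ≤ ‖μ‖ ^ p := one_le_pow₀ hge
    nlinarith
  -- eigenspace of Ac for μ, invariant under Dc
  set E : Submodule ℂ (Fin n → ℂ) := Module.End.eigenspace (Ac.mulVecLin) μ with hE
  have hwE : (w : Fin n → ℂ) ∈ E :=
    Module.End.mem_eigenspace_iff.mpr (by rw [Matrix.mulVecLin_apply]; exact hwv)
  have hEne : E ≠ ⊥ := by rw [Submodule.ne_bot_iff]; exact ⟨_, hwE, hwne⟩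
  have hcomm : Dc * Ac = Ac * Dc := by
    have : Commute Dc (NormedSpace.exp Dc) := (Commute.refl Dc).exp_right
    rw [hAc]
    exact this
  have hEinv : ∀ v ∈ E, Dc.mulVecLin v ∈ E := by
    intro v hv
    rw [hE, Module.End.mem_eigenspace_iff] at hv ⊢
    rw [Matrix.mulVecLin_apply] at hv ⊢
    rw [Matrix.mulVecLin_apply, Matrix.mulVec_mulVec, ← hcomm, ← Matrix.mulVec_mulVec, hv,
      Matrix.mulVec_smul]
  haveI : Nontrivial E := Submodule.nontrivial_iff_ne_bot.mpr hEne
  obtain ⟨ρ, hρ⟩ := Module.End.exists_eigenvalue ((Dc.mulVecLin).restrict hEinv)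
  obtain ⟨v, hv⟩ := hρ.exists_hasEigenvector
  have hvv : Dc *ᵥ (v : Fin n → ℂ) = ρ • (v : Fin n → ℂ) := by
    have h1 := Module.End.mem_eigenspace_iff.mp hv.1
    have h2 := congrArg (Subtype.val) h1
    simpa [Matrix.mulVecLin_apply] using h2
  have hvne : (v : Fin n → ℂ) ≠ 0 := fun hz => hv.2 (Subtype.coe_injective (by simpa using hz))
  have hvE : (v : Fin n → ℂ) ∈ E := v.2
  have hvμ : Ac *ᵥ (v : Fin n → ℂ) = μ • (v : Fin n → ℂ) := by
    have := Module.End.mem_eigenspace_iff.mp hvE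
    rwa [Matrix.mulVecLin_apply] at this
  -- μ = exp ρ
  have hexp : Ac *ᵥ (v : Fin n → ℂ) = Complex.exp ρ • (v : Fin n → ℂ) := by
    rw [hAc]
    exact eig_exp Dc _ ρ hvv
  have hμρ : μ = Complex.exp ρ := by
    have : (μ - Complex.exp ρ) • (v : Fin n → ℂ) = 0 := by
      rw [sub_smul, ← hvμ, ← hexp, sub_self]
    rcases smul_eq_zero.mp this with h1 | h1
    · exact sub_eq_zero.mp h1
    · exact absurd h1 hvne
  -- identify the eigenvalue of the generator
  set Pc : Matrix (Fin n) (Fin n) ℂ := P.map Complex.ofReal with hPc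
  have hDcform : Dc = (s : ℂ) • ((lam : ℂ) • (1 : Matrix (Fin n) (Fin n) ℂ) - Pcᵀ) := by
    ext i j
    rw [hDc, hD, hPc]
    simp only [Matrix.map_apply, Matrix.smul_apply, Matrix.sub_apply, Matrix.transpose_apply,
      Matrix.one_apply, smul_eq_mul]
    by_cases hij : i = j
    · subst hij
      simp only [if_pos rfl]
      push_cast
      ring
    · have hij' : ¬ j = i := fun hh => hij hh.symm
      simp only [if_neg hij, if_neg hij']
      push_cast
      ring
  set ρ₀ : ℂ := (lam : ℂ) - ρ / (s : ℂ) with hρ₀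
  have hsne : (s : ℂ) ≠ 0 := by
    simpa using ne_of_gt hs
  have hPv : Pcᵀ *ᵥ (v : Fin n → ℂ) = ρ₀ • (v : Fin n → ℂ) := by
    have h1 : ((s : ℂ) • ((lam : ℂ) • (1 : Matrix (Fin n) (Fin n) ℂ) - Pcᵀ)) *ᵥ (v : Fin n → ℂ)
        = ρ • (v : Fin n → ℂ) := by rw [← hDcform]; exact hvv
    rw [Matrix.smul_mulVec, Matrix.sub_mulVec, Matrix.smul_mulVec,
      Matrix.one_mulVec] at h1
    funext i
    have h2 := congrFun h1 i
    simp only [Pi.smul_apply, Pi.sub_apply, smul_eq_mul] at h2 ⊢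
    rw [hρ₀]
    field_simp at h2 ⊢
    ring_nf at h2 ⊢
    linear_combination -h2
  have hρ₀spec : ρ₀ ∈ spectrum ℂ Pc := by
    rw [spectrum.mem_iff]
    intro hUnit
    set X : Matrix (Fin n) (Fin n) ℂ := algebraMap ℂ (Matrix (Fin n) (Fin n) ℂ) ρ₀ - Pc with hX
    have hdetX : IsUnit X.det := (Matrix.isUnit_iff_isUnit_det X).mp hUnit
    have hdetXT : IsUnit Xᵀ.det := by rwa [Matrix.det_transpose]
    have hXTv : Xᵀ *ᵥ (v : Fin n → ℂ) = 0 := by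
      have hXT : Xᵀ = ρ₀ • (1 : Matrix (Fin n) (Fin n) ℂ) - Pcᵀ := by
        rw [hX, Matrix.transpose_sub, Algebra.algebraMap_eq_smul_one, Matrix.transpose_smul,
          Matrix.transpose_one]
      rw [hXT, Matrix.sub_mulVec, Matrix.smul_mulVec, Matrix.one_mulVec, hPv, sub_self]
    have hv0 : (v : Fin n → ℂ) = 0 := by
      have h3 : (Xᵀ)⁻¹ *ᵥ (Xᵀ *ᵥ (v : Fin n → ℂ)) = (v : Fin n → ℂ) := by
        rw [Matrix.mulVec_mulVec, Matrix.nonsing_inv_mul _ hdetXT, Matrix.one_mulVec]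
      rw [hXTv, Matrix.mulVec_zero] at h3
      exact h3.symm
    exact hvne hv0
  have hρ₀re : ρ₀.re ≤ lam := hspec ρ₀ hρ₀spec
  have hρre : 0 ≤ ρ.re := by
    have h4 : ρ₀.re = lam - ρ.re / s := by
      rw [hρ₀]
      simp [Complex.sub_re, Complex.div_ofReal_re]
    rw [h4] at hρ₀re
    have h5 : 0 ≤ ρ.re / s := by linarith
    have h6 := mul_nonneg h5 hs.le
    rwa [div_mul_cancel₀ _ (ne_of_gt hs)] at h6
  have hge1 : (1 : ℝ) ≤ ‖μ‖ := by
    rw [hμρ, Complex.norm_exp]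
    exact Real.one_le_exp hρre
  linarith

/-- the reachable set `F` equals all of `ℝⁿ`. -/

theorem stmt1 (ℏ n m : ℕ) (hℏ : 0 < ℏ) (hn : 0 < n) (hm : 0 < m)
    (t : ℕ → ℝ) (ht0 : t 0 = 0) (htmono : StrictMono t)
    (htper : ∀ j : ℕ, t (j + ℏ) = t j + t ℏ)
    (P : Matrix (Fin n) (Fin n) ℝ) (Q : ℕ → Matrix (Fin n) (Fin m) ℝ)
    (lam : ℝ) (hlam : 0 < lam)
    (hrank : ∃ kstar : ℕ, 0 < kstar ∧
      Submodule.span ℝ {x : Fin n → ℝ |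
        ∃ j ∈ Finset.Icc 1 kstar, ∃ i : Fin m, x = (mexp (-(t j)) P * Q (nu ℏ j))ᵀ i} = ⊤)
    (hspec : ∀ ρ ∈ spectrum ℂ (P.map Complex.ofReal), ρ.re ≤ lam) :
    ∀ η : EuclideanSpace ℝ (Fin n), ∃ k : ℕ, 0 < k ∧
      ∃ ξ : ℕ → EuclideanSpace ℝ (Fin m),
        (∀ j ∈ Finset.Icc 1 k, ‖ξ j‖ ≤ 1) ∧
        η = ∑ j ∈ Finset.Icc 1 k,
          act (mexp (t j) (lam • (1 : Matrix (Fin n) (Fin n) ℝ) - P) * Q (nu ℏ j)) (ξ j) := by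
  obtain ⟨kstar, hk0, hspan⟩ := hrank
  intro η
  classical
  set B : Matrix (Fin n) (Fin n) ℝ := lam • (1 : Matrix (Fin n) (Fin n) ℝ) - P with hB
  set MM : ℕ → Matrix (Fin n) (Fin m) ℝ := fun j => mexp (t j) B * Q (nu ℏ j) with hMM
  set f : ℕ → EuclideanSpace ℝ (Fin n) → ℝ :=
    fun k u => ∑ j ∈ Icc 1 k, ‖act (MM j)ᵀ u‖ ^ 2 with hf
  have htpos : ∀ j, 0 < j → 0 < t j := fun j hj => ht0 ▸ htmono hj
  have htper' : ∀ j q : ℕ, t (j + q * ℏ) = t j + q * t ℏ := by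
    intro j q
    induction q with
    | zero => simp
    | succ q ih =>
      have h1 : j + (q + 1) * ℏ = (j + q * ℏ) + ℏ := by ring
      rw [h1, htper, ih]
      push_cast; ring
  set L : ℕ := kstar * ℏ with hLdef
  have hL0 : 0 < L := Nat.mul_pos hk0 hℏ
  have hkL : kstar ≤ L := Nat.le_mul_of_pos_right kstar hℏ
  have htL : t L = kstar * t ℏ := by
    have h1 := htper' 0 kstar
    simpa [ht0] using h1
  have htLpos : 0 < t L := htpos L hL0
  have htjp : ∀ j p : ℕ, t (j + p * L) = t j + p * t L := by
    intro j p
    have h1 : j + p * L = j + (p * kstar) * ℏ := by rw [hLdef]; ring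
    rw [h1, htper' j (p * kstar), htL]
    push_cast; ring
  have hnup : ∀ j p : ℕ, nu ℏ (j + p * L) = nu ℏ j := by
    intro j p
    have h1 : j + p * L = j + (p * kstar) * ℏ := by rw [hLdef]; ring
    rw [h1]
    unfold nu
    rw [Nat.add_mul_mod_self_right]
  set A : Matrix (Fin n) (Fin n) ℝ := mexp (t L) B with hA
  have hMMs : ∀ j p : ℕ, MM (j + p * L) = A ^ p * MM j := by
    intro j p
    simp only [hMM]
    rw [htjp, hnup, add_comm (t j), mexp_add, mexp_nat_mul, ← hA, Matrix.mul_assoc]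
  have hact : ∀ (j p : ℕ) (u : EuclideanSpace ℝ (Fin n)),
      act (MM (j + p * L))ᵀ u = act (MM j)ᵀ (act ((Aᵀ) ^ p) u) := by
    intro j p u
    rw [hMMs, Matrix.transpose_mul, Matrix.transpose_pow, act_mul]
  have hfnn : ∀ k u, 0 ≤ f k u := fun k u => Finset.sum_nonneg fun j _ => sq_nonneg _
  have hscale : ∀ (k : ℕ) (c : ℝ) (u : EuclideanSpace ℝ (Fin n)),
      f k (c • u) = c ^ 2 * f k u := by
    intro k c u
    simp only [hf]
    rw [Finset.mul_sum]
    refine Finset.sum_congr rfl fun j _ => ?_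
    rw [act_smul, norm_smul]
    simp only [Real.norm_eq_abs, mul_pow, sq_abs]
  have hgpos : ∀ u : EuclideanSpace ℝ (Fin n), u ≠ 0 → 0 < f kstar u := by
    intro u hu
    rcases lt_or_eq_of_le (hfnn kstar u) with h | h
    · exact h
    exfalso
    have hzero : ∀ j ∈ Icc 1 kstar, ‖act (MM j)ᵀ u‖ ^ 2 = 0 :=
      (Finset.sum_eq_zero_iff_of_nonneg (fun j _ => sq_nonneg _)).mp h.symm
    set u' : Fin n → ℝ := (WithLp.equiv 2 (Fin n → ℝ)) u with hu'
    have hmv : ∀ j ∈ Icc 1 kstar, (mexp (-(t j)) P * Q (nu ℏ j))ᵀ *ᵥ u' = 0 := by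
      intro j hj
      have h2 : ‖act (MM j)ᵀ u‖ = 0 := by
        have h1 := hzero j hj
        nlinarith [norm_nonneg (act (MM j)ᵀ u), sq_nonneg ‖act (MM j)ᵀ u‖]
      have h1 : act (MM j)ᵀ u = 0 := norm_eq_zero.mp h2
      have h3 : (MM j)ᵀ *ᵥ u' = 0 := by
        have h4 := congrArg (WithLp.equiv 2 (Fin m → ℝ)) h1
        rw [act_apply] at h4
        simpa [hu'] using h4
      have h4 : (MM j)ᵀ = Real.exp (lam * t j) • (mexp (-(t j)) P * Q (nu ℏ j))ᵀ := by
        simp only [hMM, hB]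
        rw [mexp_lam_sub, Matrix.smul_mul, Matrix.transpose_smul]
      rw [h4, Matrix.smul_mulVec] at h3
      rcases smul_eq_zero.mp h3 with h5 | h5
      · exact absurd h5 (ne_of_gt (Real.exp_pos _))
      · exact h5
    set φ : (Fin n → ℝ) →ₗ[ℝ] ℝ :=
      { toFun := fun w => dotProduct w u'
        map_add' := fun a b => add_dotProduct a b u'
        map_smul' := fun c a => smul_dotProduct c a u' } with hφ
    have hφS : ∀ x ∈ {x : Fin n → ℝ |
        ∃ j ∈ Finset.Icc 1 kstar, ∃ i : Fin m, x = (mexp (-(t j)) P * Q (nu ℏ j))ᵀ i},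
        φ x = 0 := by
      rintro x ⟨j, hj, i, rfl⟩
      have h6 : ((mexp (-(t j)) P * Q (nu ℏ j))ᵀ *ᵥ u') i = 0 := by rw [hmv j hj]; rfl
      exact h6
    have hφall : φ u' = 0 := by
      have hmem : u' ∈ Submodule.span ℝ {x : Fin n → ℝ |
          ∃ j ∈ Finset.Icc 1 kstar, ∃ i : Fin m, x = (mexp (-(t j)) P * Q (nu ℏ j))ᵀ i} := by
        rw [hspan]; trivial
      exact Submodule.span_induction (p := fun x _ => φ x = 0) hφS (map_zero φ)
        (fun x y _ _ hx hy => by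
          have hx' : φ x = 0 := hx
          have hy' : φ y = 0 := hy
          show φ (x + y) = 0
          rw [φ.map_add, hx', hy', add_zero])
        (fun c x _ hx => by
          have hx' : φ x = 0 := hx
          show φ (c • x) = 0
          rw [φ.map_smul, hx', smul_zero]) hmem
    have hcoord : ∀ l, u' l = 0 := by
      intro l
      have h7 : ∑ i, u' i * u' i = 0 := by simpa [hφ, dotProduct] using hφall
      have h8 : ∀ i ∈ Finset.univ, u' i * u' i = 0 :=
        (Finset.sum_eq_zero_iff_of_nonneg (fun i _ => mul_self_nonneg (u' i))).mp h7
      exact mul_self_eq_zero.mp (h8 l (Finset.mem_univ l))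
    apply hu
    have h9 : (WithLp.equiv 2 (Fin n → ℝ)) u = 0 := by
      rw [← hu']; exact funext hcoord
    have h10 := congrArg (WithLp.equiv 2 (Fin n → ℝ)).symm h9
    simpa using h10
  have hcont : ∀ k, Continuous (f k) := by
    intro k
    simp only [hf]
    apply continuous_finset_sum
    intro j _
    have h1 : Continuous fun u : EuclideanSpace ℝ (Fin n) => act (MM j)ᵀ u :=
      (Matrix.toEuclideanLin (MM j)ᵀ).continuous_of_finiteDimensional
    exact h1.norm.pow 2
  haveI : Nonempty (Fin n) := Fin.pos_iff_nonempty.mp hn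
  have hsph : (Metric.sphere (0 : EuclideanSpace ℝ (Fin n)) 1).Nonempty :=
    NormedSpace.sphere_nonempty.mpr zero_le_one
  obtain ⟨u₀, hu₀s, hu₀min⟩ :=
    (isCompact_sphere (0 : EuclideanSpace ℝ (Fin n)) 1).exists_isMinOn hsph
      ((hcont kstar).continuousOn)
  rw [isMinOn_iff] at hu₀min
  set c₀ := f kstar u₀ with hc₀
  have hu₀n : ‖u₀‖ = 1 := by rwa [mem_sphere_iff_norm, sub_zero] at hu₀s
  have hc₀pos : 0 < c₀ := hgpos u₀ (by intro hz; rw [hz] at hu₀n; simp at hu₀n)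
  have hglb : ∀ v : EuclideanSpace ℝ (Fin n), c₀ * ‖v‖ ^ 2 ≤ f kstar v := by
    intro v
    rcases eq_or_ne v 0 with rfl | hv
    · simpa using hfnn kstar 0
    · have hvn : 0 < ‖v‖ := norm_pos_iff.mpr hv
      have hw : (‖v‖⁻¹ • v) ∈ Metric.sphere (0 : EuclideanSpace ℝ (Fin n)) 1 := by
        rw [mem_sphere_iff_norm, sub_zero, norm_smul]
        simp [abs_of_pos (inv_pos.mpr hvn), inv_mul_cancel₀ (ne_of_gt hvn)]
      have h1 := hu₀min _ hw
      rw [hscale] at h1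
      have h3 := mul_le_mul_of_nonneg_left h1 (le_of_lt (pow_pos hvn 2))
      calc c₀ * ‖v‖ ^ 2 = ‖v‖ ^ 2 * c₀ := by ring
        _ ≤ ‖v‖ ^ 2 * ((‖v‖⁻¹) ^ 2 * f kstar v) := h3
        _ = f kstar v := by field_simp
  have hmonof : ∀ k k', k ≤ k' → ∀ u, f k u ≤ f k' u := by
    intro k k' hkk u
    apply Finset.sum_le_sum_of_subset_of_nonneg (Finset.Icc_subset_Icc_right hkk)
    intros
    exact sq_nonneg _
  have hpt : ∀ u : EuclideanSpace ℝ (Fin n), ‖u‖ = 1 → ∀ R : ℝ, ∃ k, R < f k u := by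
    intro u hun R
    have hu : u ≠ 0 := by intro hz; rw [hz] at hun; simp at hun
    set u' : Fin n → ℝ := (WithLp.equiv 2 (Fin n → ℝ)) u with hu'
    have hu'ne : u' ≠ 0 := by
      intro hz
      apply hu
      have h1 := congrArg (WithLp.equiv 2 (Fin n → ℝ)).symm hz
      simpa [hu'] using h1
    have hnot : ¬ Filter.Tendsto (fun p : ℕ => act ((Aᵀ) ^ p) u) Filter.atTop (nhds 0) := by
      intro hten
      apply no_decay (t L) lam htLpos P hspec u' hu'ne
      rw [← hB, ← hA]
      have hco : Continuous (WithLp.equiv 2 (Fin n → ℝ)) := PiLp.continuous_ofLp 2 _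
      have h1 := (hco.tendsto (0 : EuclideanSpace ℝ (Fin n))).comp hten
      have h2 : (WithLp.equiv 2 (Fin n → ℝ)) (0 : EuclideanSpace ℝ (Fin n)) = 0 := rfl
      rw [h2] at h1
      have h3 : (fun p : ℕ => ((Aᵀ) ^ p) *ᵥ u')
          = (WithLp.equiv 2 (Fin n → ℝ)) ∘ (fun p : ℕ => act ((Aᵀ) ^ p) u) := by
        funext p
        simp [act_apply, hu']
      rw [h3]
      exact h1
    rw [Metric.tendsto_atTop] at hnot
    push_neg at hnot
    obtain ⟨ε, hε, hfr⟩ := hnot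
    have hfreq : ∀ N : ℕ, ∃ p, N ≤ p ∧ ε ^ 2 ≤ ‖act ((Aᵀ) ^ p) u‖ ^ 2 := by
      intro N
      obtain ⟨p, hp1, hp2⟩ := hfr N
      refine ⟨p, hp1, ?_⟩
      rw [dist_zero_right] at hp2
      exact pow_le_pow_left₀ (le_of_lt hε) hp2 2
    obtain ⟨N, hN⟩ := sum_unbounded (fun p => ‖act ((Aᵀ) ^ p) u‖ ^ 2)
      (fun p => sq_nonneg _) (ε ^ 2) (pow_pos hε 2) hfreq ((R + 1) / c₀)
    refine ⟨N * L, ?_⟩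
    have hinj : ∑ p ∈ range N, ∑ j ∈ Icc 1 kstar, ‖act (MM (j + p * L))ᵀ u‖ ^ 2
        ≤ f (N * L) u := by
      simp only [hf]
      have hprod : ∑ p ∈ range N, ∑ j ∈ Icc 1 kstar, ‖act (MM (j + p * L))ᵀ u‖ ^ 2
          = ∑ x ∈ range N ×ˢ Icc 1 kstar, ‖act (MM (x.2 + x.1 * L))ᵀ u‖ ^ 2 :=
        (Finset.sum_product (range N) (Icc 1 kstar)
          (fun x : ℕ × ℕ => ‖act (MM (x.2 + x.1 * L))ᵀ u‖ ^ 2)).symm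
      rw [hprod]
      have hinj2 : ∀ x ∈ range N ×ˢ Icc 1 kstar, ∀ y ∈ range N ×ˢ Icc 1 kstar,
          x.2 + x.1 * L = y.2 + y.1 * L → x = y := by
        rintro ⟨p, j⟩ hx ⟨p', j'⟩ hy heq
        rw [Finset.mem_product, Finset.mem_range, Finset.mem_Icc] at hx hy
        have hjL : j ≤ L := le_trans hx.2.2 hkL
        have hj'L : j' ≤ L := le_trans hy.2.2 hkL
        have hj1 : 1 ≤ j := hx.2.1
        have hj'1 : 1 ≤ j' := hy.2.1
        have hd1 : j - 1 < L := by omega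
        have hd2 : j' - 1 < L := by omega
        have e1 : (j - 1) + L * p = (j' - 1) + L * p' := by
          have h1 : j + p * L = j' + p' * L := heq
          have h2 : p * L = L * p := Nat.mul_comm p L
          have h3 : p' * L = L * p' := Nat.mul_comm p' L
          omega
        have d1 : ((j - 1) + L * p) / L = p := by
          rw [Nat.add_mul_div_left _ _ hL0, Nat.div_eq_of_lt hd1, zero_add]
        have d2 : ((j' - 1) + L * p') / L = p' := by
          rw [Nat.add_mul_div_left _ _ hL0, Nat.div_eq_of_lt hd2, zero_add]
        have hpp : p = p' := by rw [← d1, ← d2, e1]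
        subst hpp
        have hjj : j = j' := by omega
        simp [hjj]
      rw [← Finset.sum_image (f := fun y => ‖act (MM y)ᵀ u‖ ^ 2)
        (g := fun x : ℕ × ℕ => x.2 + x.1 * L) hinj2]
      apply Finset.sum_le_sum_of_subset_of_nonneg
      · intro x hx
        simp only [Finset.mem_image] at hx
        obtain ⟨⟨p, j⟩, hpj, rfl⟩ := hx
        rw [Finset.mem_product, Finset.mem_range, Finset.mem_Icc] at hpj
        rw [Finset.mem_Icc]
        constructor
        · omega
        · have h1 : j ≤ L := le_trans hpj.2.2 hkL
          have h2 : p + 1 ≤ N := hpj.1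
          calc j + p * L ≤ L + p * L := by omega
            _ = (p + 1) * L := by ring
            _ ≤ N * L := Nat.mul_le_mul_right L h2
      · intros
        exact sq_nonneg _
    have hstep1 : ∀ p ∈ range N, c₀ * ‖act ((Aᵀ) ^ p) u‖ ^ 2
        ≤ ∑ j ∈ Icc 1 kstar, ‖act (MM (j + p * L))ᵀ u‖ ^ 2 := by
      intro p _
      calc c₀ * ‖act ((Aᵀ) ^ p) u‖ ^ 2 ≤ f kstar (act ((Aᵀ) ^ p) u) := hglb _
        _ = ∑ j ∈ Icc 1 kstar, ‖act (MM (j + p * L))ᵀ u‖ ^ 2 := by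
            simp only [hf]
            exact (Finset.sum_congr rfl fun j _ => by rw [hact]).symm
    have hchain : c₀ * ∑ p ∈ range N, ‖act ((Aᵀ) ^ p) u‖ ^ 2 ≤ f (N * L) u := by
      calc c₀ * ∑ p ∈ range N, ‖act ((Aᵀ) ^ p) u‖ ^ 2
          = ∑ p ∈ range N, c₀ * ‖act ((Aᵀ) ^ p) u‖ ^ 2 := Finset.mul_sum _ _ _
        _ ≤ ∑ p ∈ range N, ∑ j ∈ Icc 1 kstar, ‖act (MM (j + p * L))ᵀ u‖ ^ 2 :=
            Finset.sum_le_sum hstep1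
        _ ≤ f (N * L) u := hinj
    rw [div_le_iff₀ hc₀pos, mul_comm] at hN
    linarith
  obtain ⟨k₁, hk₁⟩ := uniform_sphere f hcont hmonof hpt (‖η‖ ^ 2 + 1)
  set k := max k₁ 1 with hk
  have hkpos : 0 < k := lt_of_lt_of_le one_pos (le_max_right _ _)
  have hsphere : ∀ u : EuclideanSpace ℝ (Fin n), ‖u‖ = 1 → ‖η‖ ^ 2 + 1 ≤ f k u :=
    fun u hu => le_trans (hk₁ u hu) (hmonof _ _ (le_max_left _ _) u)
  have hlb : ∀ u : EuclideanSpace ℝ (Fin n), (‖η‖ ^ 2 + 1) * ‖u‖ ^ 2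
      ≤ ∑ j ∈ Icc 1 k, ‖act (MM j)ᵀ u‖ ^ 2 := by
    intro u
    have hgoal : (‖η‖ ^ 2 + 1) * ‖u‖ ^ 2 ≤ f k u := by
      rcases eq_or_ne u 0 with rfl | hu
      · simpa using hfnn k 0
      · have hvn : 0 < ‖u‖ := norm_pos_iff.mpr hu
        have hw : ‖(‖u‖⁻¹ • u)‖ = 1 := by
          rw [norm_smul]
          simp [abs_of_pos (inv_pos.mpr hvn), inv_mul_cancel₀ (ne_of_gt hvn)]
        have h1 := hsphere _ hw
        rw [hscale] at h1
        have h3 := mul_le_mul_of_nonneg_left h1 (le_of_lt (pow_pos hvn 2))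
        calc (‖η‖ ^ 2 + 1) * ‖u‖ ^ 2 = ‖u‖ ^ 2 * (‖η‖ ^ 2 + 1) := by ring
          _ ≤ ‖u‖ ^ 2 * ((‖u‖⁻¹) ^ 2 * f k u) := h3
          _ = f k u := by field_simp
    simpa [hf] using hgoal
  have hcpos : (0 : ℝ) < ‖η‖ ^ 2 + 1 := by positivity
  obtain ⟨ξ, hξ1, hξ2⟩ := solve k MM η (‖η‖ ^ 2 + 1) hcpos (by linarith) hlb
  exact ⟨k, hkpos, ξ, fun j _ => hξ1 j, hξ2⟩
end

section
/- Let n be a positive integer, P ∈ ℝ^{n×n}, and let λ₁ be a real number such that every ρ ∈ σ(P) satisfies Re(ρ) ≤ λ₁. If φ ∈ ℝⁿ satisfies ‖e^{(λ₁ I_n − P^⊤) t} φ‖ → 0 as t → +∞, then φ = 0. -/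
open Matrix Filter

section aux

open Polynomial

variable {n : ℕ}

/-- exp of a matrix applied to an eigenvector. -/
lemma exp_mulVec_eigenvector (B : Matrix (Fin n) (Fin n) ℂ) (y : Fin n → ℂ) (μ : ℂ)
    (hy : B *ᵥ y = μ • y) :
    NormedSpace.exp B *ᵥ y = Complex.exp μ • y := by
  letI : SeminormedRing (Matrix (Fin n) (Fin n) ℂ) := Matrix.linftyOpSemiNormedRing
  letI : NormedRing (Matrix (Fin n) (Fin n) ℂ) := Matrix.linftyOpNormedRing
  letI : NormedAlgebra ℝ (Matrix (Fin n) (Fin n) ℂ) := Matrix.linftyOpNormedAlgebra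
  have hpow : ∀ k : ℕ, B ^ k *ᵥ y = μ ^ k • y := by
    intro k
    induction k with
    | zero => simp
    | succ k ih =>
      rw [pow_succ, ← Matrix.mulVec_mulVec, hy, Matrix.mulVec_smul, ih, smul_smul, pow_succ,
        mul_comm]
  let L : Matrix (Fin n) (Fin n) ℂ →ₗ[ℝ] (Fin n → ℂ) :=
    { toFun := fun C => C *ᵥ y
      map_add' := fun C D => Matrix.add_mulVec C D y
      map_smul' := fun c C => by simp [Matrix.smul_mulVec] }
  let L' : Matrix (Fin n) (Fin n) ℂ →L[ℝ] (Fin n → ℂ) :=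
    { toLinearMap := L, cont := LinearMap.continuous_of_finiteDimensional L }
  have h1 : HasSum (fun k : ℕ => (k.factorial⁻¹ : ℝ) • B ^ k)
      (NormedSpace.exp B) := NormedSpace.exp_series_hasSum_exp' B
  have h2 : HasSum (fun k : ℕ => L' ((k.factorial⁻¹ : ℝ) • B ^ k))
      (L' (NormedSpace.exp B)) := L'.hasSum h1
  have h3 : HasSum (fun k : ℕ => ((k.factorial⁻¹ : ℂ) • μ ^ k) • y)
      ((NormedSpace.exp μ) • y) :=
    (NormedSpace.exp_series_hasSum_exp' μ).smul_const y
  have hterm : (fun k : ℕ => L' ((k.factorial⁻¹ : ℝ) • B ^ k)) =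
      fun k : ℕ => ((k.factorial⁻¹ : ℂ) • μ ^ k) • y := by
    funext k
    show ((k.factorial⁻¹ : ℝ) • B ^ k) *ᵥ y = _
    rw [Matrix.smul_mulVec, hpow k, ← smul_assoc]
    congr 1
    simp [Complex.real_smul]
  rw [hterm] at h2
  have := h2.unique h3
  show L' (NormedSpace.exp B) = _
  rw [this, Complex.exp_eq_exp_ℂ]

/-- entrywise complexification commutes with exp. -/
lemma map_exp_ofReal (M : Matrix (Fin n) (Fin n) ℝ) :
    (NormedSpace.exp M).map Complex.ofReal = NormedSpace.exp (M.map Complex.ofReal) := by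
  letI : SeminormedRing (Matrix (Fin n) (Fin n) ℝ) := Matrix.linftyOpSemiNormedRing
  letI : NormedRing (Matrix (Fin n) (Fin n) ℝ) := Matrix.linftyOpNormedRing
  letI : NormedAlgebra ℝ (Matrix (Fin n) (Fin n) ℝ) := Matrix.linftyOpNormedAlgebra
  letI : SeminormedRing (Matrix (Fin n) (Fin n) ℂ) := Matrix.linftyOpSemiNormedRing
  letI : NormedRing (Matrix (Fin n) (Fin n) ℂ) := Matrix.linftyOpNormedRing
  letI : NormedAlgebra ℝ (Matrix (Fin n) (Fin n) ℂ) := Matrix.linftyOpNormedAlgebra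
  letI : NormedAlgebra ℚ (Matrix (Fin n) (Fin n) ℝ) := Matrix.linftyOpNormedAlgebra
  letI : NormedAlgebra ℚ (Matrix (Fin n) (Fin n) ℂ) := Matrix.linftyOpNormedAlgebra
  have hf : Continuous fun C : Matrix (Fin n) (Fin n) ℝ =>
      (Complex.ofRealHom.mapMatrix : Matrix (Fin n) (Fin n) ℝ →+* Matrix (Fin n) (Fin n) ℂ) C := by
    apply continuous_matrix
    intro i j
    exact Complex.continuous_ofReal.comp ((continuous_apply j).comp (continuous_apply i))
  exact NormedSpace.map_exp
    (Complex.ofRealHom.mapMatrix : Matrix (Fin n) (Fin n) ℝ →+* Matrix (Fin n) (Fin n) ℂ) hf M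

/-- from a vector annihilated by a product of linear factors, extract an eigenvector
in the orbit of the vector under polynomials of the matrix. -/
lemma exists_eig_of_list (A : Matrix (Fin n) (Fin n) ℂ) :
    ∀ (l : List ℂ) (x : Fin n → ℂ), x ≠ 0 →
      (Polynomial.aeval A (l.map (fun a => X - C a)).prod) *ᵥ x = 0 →
      ∃ (μ : ℂ) (y : Fin n → ℂ) (q : Polynomial ℂ), y ≠ 0 ∧ A *ᵥ y = μ • y ∧
        (Polynomial.aeval A q) *ᵥ x = y
  | [], x, hx, h => absurd (by simpa using h) hx
  | (a :: l), x, hx, h => by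
    set pl : Polynomial ℂ := (l.map (fun a => X - C a)).prod with hpl
    set z : Fin n → ℂ := (Polynomial.aeval A pl) *ᵥ x with hz
    by_cases hz0 : z = 0
    · exact exists_eig_of_list A l x hx hz0
    · refine ⟨a, z, pl, hz0, ?_, rfl⟩
      have h' : (Polynomial.aeval A (X - C a)) *ᵥ z = 0 := by
        have hh := h
        rw [List.map_cons, List.prod_cons, _root_.map_mul, ← Matrix.mulVec_mulVec] at hh
        exact hh
      have : (A - a • 1) *ᵥ z = 0 := by
        rw [map_sub, Polynomial.aeval_X, Polynomial.aeval_C,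
          Algebra.algebraMap_eq_smul_one] at h'
        exact h'
      rw [Matrix.sub_mulVec, Matrix.smul_mulVec, Matrix.one_mulVec, sub_eq_zero] at this
      exact this

lemma exists_eig (A : Matrix (Fin n) (Fin n) ℂ) (x : Fin n → ℂ) (hx : x ≠ 0) :
    ∃ (μ : ℂ) (y : Fin n → ℂ) (q : Polynomial ℂ), y ≠ 0 ∧ A *ᵥ y = μ • y ∧
      (Polynomial.aeval A q) *ᵥ x = y := by
  apply exists_eig_of_list A A.charpoly.roots.toList x hx
  have hsplit : A.charpoly = (A.charpoly.roots.map (fun a => X - C a)).prod :=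
    (IsAlgClosed.splits _).eq_prod_roots_of_monic (A.charpoly_monic)
  have : ((A.charpoly.roots.toList.map (fun a => X - C a)).prod : Polynomial ℂ)
      = A.charpoly := by
    conv_rhs => rw [hsplit, ← Multiset.coe_toList A.charpoly.roots, Multiset.map_coe,
      Multiset.prod_coe]
  rw [this, Matrix.aeval_self_charpoly, Matrix.zero_mulVec]

/-- an eigenvalue is in the spectrum. -/
lemma mem_spectrum_of_eig (B : Matrix (Fin n) (Fin n) ℂ) (y : Fin n → ℂ) (ρ : ℂ)
    (hy : y ≠ 0) (h : B *ᵥ y = ρ • y) : ρ ∈ spectrum ℂ B := by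
  rw [spectrum.mem_iff]
  intro hu
  apply hy
  obtain ⟨u, hu'⟩ := hu
  have hker : (algebraMap ℂ (Matrix (Fin n) (Fin n) ℂ) ρ - B) *ᵥ y = 0 := by
    rw [Matrix.sub_mulVec, Algebra.algebraMap_eq_smul_one, Matrix.smul_mulVec,
      Matrix.one_mulVec, h, sub_self]
  calc y = ((↑u⁻¹ : Matrix (Fin n) (Fin n) ℂ) * ↑u) *ᵥ y := by
          rw [u.inv_mul, Matrix.one_mulVec]
    _ = (↑u⁻¹ : Matrix (Fin n) (Fin n) ℂ) *ᵥ ((↑u : Matrix (Fin n) (Fin n) ℂ) *ᵥ y) := by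
          rw [Matrix.mulVec_mulVec]
    _ = 0 := by rw [hu', hker, Matrix.mulVec_zero]

end aux

/-- if `‖e^{(λ₁ Iₙ − P^⊤) t} φ‖ → 0` as `t → +∞`, then `φ = 0`. -/
theorem stmt5 (n : ℕ) (hn : 0 < n) (P : Matrix (Fin n) (Fin n) ℝ) (lam : ℝ)
    (hspec : ∀ ρ ∈ spectrum ℂ (P.map Complex.ofReal), ρ.re ≤ lam)
    (φ : EuclideanSpace ℝ (Fin n))
    (hφ : Tendsto (fun t : ℝ =>
        ‖act (mexp t (lam • (1 : Matrix (Fin n) (Fin n) ℝ) - Pᵀ)) φ‖) atTop (nhds 0)) :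
    φ = 0 := by
  by_contra hφ0
  set M : Matrix (Fin n) (Fin n) ℝ := lam • (1 : Matrix (Fin n) (Fin n) ℝ) - Pᵀ with hM
  set A : Matrix (Fin n) (Fin n) ℂ := M.map Complex.ofReal with hA
  set φv : Fin n → ℝ := (WithLp.equiv 2 (Fin n → ℝ)) φ with hφv
  set x : Fin n → ℂ := fun i => (φv i : ℂ) with hxdef
  have hx : x ≠ 0 := by
    intro hx0
    apply hφ0
    ext i
    have := congrFun hx0 i
    simpa [hxdef, hφv] using this
  obtain ⟨μ, y, q, hy0, hyeig, hq⟩ := exists_eig A x hx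
  -- `μ.re ≥ 0`
  have hABP : A = (lam : ℂ) • (1 : Matrix (Fin n) (Fin n) ℂ) - (P.map Complex.ofReal)ᵀ := by
    ext i j
    simp [hA, hM, Matrix.map_apply, Matrix.sub_apply, Matrix.smul_apply, Matrix.one_apply,
      Matrix.transpose_apply, apply_ite]
  have hBy : (P.map Complex.ofReal)ᵀ *ᵥ y = ((lam : ℂ) - μ) • y := by
    have := hyeig
    rw [hABP, Matrix.sub_mulVec, Matrix.smul_mulVec, Matrix.one_mulVec] at this
    have h2 : (P.map Complex.ofReal)ᵀ *ᵥ y = (lam : ℂ) • y - μ • y := by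
      rw [← this]; abel
    rw [h2, ← sub_smul]
  have hρspec : ((lam : ℂ) - μ) ∈ spectrum ℂ (P.map Complex.ofReal) := by
    have hmem := mem_spectrum_of_eig _ y _ hy0 hBy
    rw [spectrum.mem_iff] at hmem ⊢
    intro hu
    apply hmem
    have : algebraMap ℂ (Matrix (Fin n) (Fin n) ℂ) ((lam : ℂ) - μ) - (P.map Complex.ofReal)ᵀ
        = (algebraMap ℂ (Matrix (Fin n) (Fin n) ℂ) ((lam : ℂ) - μ) - P.map Complex.ofReal)ᵀ := by
      rw [Matrix.transpose_sub]
      congr 1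
      rw [Algebra.algebraMap_eq_smul_one, Matrix.transpose_smul, Matrix.transpose_one]
    rw [this, Matrix.isUnit_transpose]
    exact hu
  have hμre : 0 ≤ μ.re := by
    have := hspec _ hρspec
    simp only [Complex.sub_re, Complex.ofReal_re] at this
    linarith
  -- convergence of entries
  have h0 : Tendsto (fun t : ℝ => act (mexp t M) φ) atTop (nhds 0) :=
    tendsto_zero_iff_norm_tendsto_zero.mpr hφ
  have hcoordR : ∀ j, Tendsto (fun t : ℝ => (NormedSpace.exp (t • M) *ᵥ φv) j)
      atTop (nhds 0) := by
    intro j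
    have := ((EuclideanSpace.proj j : EuclideanSpace ℝ (Fin n) →L[ℝ] ℝ).continuous.tendsto
      (0 : EuclideanSpace ℝ (Fin n))).comp h0
    simpa [Function.comp_def, act, mexp, Matrix.toEuclideanLin_apply, hφv] using this
  have hexpmap : ∀ t : ℝ, NormedSpace.exp (t • A) = (NormedSpace.exp (t • M)).map
      Complex.ofReal := by
    intro t
    rw [map_exp_ofReal]
    congr 1
    ext i j
    simp [hA, Matrix.map_apply, Matrix.smul_apply, Complex.real_smul]
  have hcoordC : ∀ j, Tendsto (fun t : ℝ => (NormedSpace.exp (t • A) *ᵥ x) j)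
      atTop (nhds 0) := by
    intro j
    have heq : ∀ t : ℝ, (NormedSpace.exp (t • A) *ᵥ x) j
        = ((NormedSpace.exp (t • M) *ᵥ φv) j : ℂ) := by
      intro t
      rw [hexpmap t]
      exact (RingHom.map_mulVec Complex.ofRealHom (NormedSpace.exp (t • M)) φv j).symm
    simp only [heq]
    have := (Complex.continuous_ofReal.tendsto 0).comp (hcoordR j)
    simpa [Function.comp_def] using this
  -- entries of q(A) * exp(tA) x → 0
  obtain ⟨i, hyi⟩ : ∃ i, y i ≠ 0 := by
    by_contra hc
    push_neg at hc
    exact hy0 (funext hc)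
  have htend : Tendsto (fun t : ℝ =>
      ((Polynomial.aeval A q) *ᵥ (NormedSpace.exp (t • A) *ᵥ x)) i) atTop (nhds 0) := by
    have : ∀ t : ℝ, ((Polynomial.aeval A q) *ᵥ (NormedSpace.exp (t • A) *ᵥ x)) i
        = ∑ j, (Polynomial.aeval A q) i j * (NormedSpace.exp (t • A) *ᵥ x) j := by
      intro t; simp [Matrix.mulVec, dotProduct]
    simp only [this]
    have : Tendsto (fun t : ℝ => ∑ j, (Polynomial.aeval A q) i j
        * (NormedSpace.exp (t • A) *ᵥ x) j) atTop
        (nhds (∑ j : Fin n, (0 : ℂ))) := by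
      apply tendsto_finset_sum
      intro j _
      simpa using (hcoordC j).const_mul ((Polynomial.aeval A q) i j)
    simpa using this
  -- but that expression equals `Complex.exp (t * μ) • y`
  have hcomm : Commute (Polynomial.aeval A q) A := by
    have := ((Commute.all q (Polynomial.X : Polynomial ℂ)).map (Polynomial.aeval A))
    rwa [Polynomial.aeval_X] at this
  have hkey : ∀ t : ℝ, ((Polynomial.aeval A q) *ᵥ (NormedSpace.exp (t • A) *ᵥ x))
      = Complex.exp ((t : ℂ) * μ) • y := by
    intro t
    have hc2 : Commute (NormedSpace.exp (t • A)) (Polynomial.aeval A q) :=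
      Commute.exp_left ((hcomm.symm).smul_left t)
    rw [Matrix.mulVec_mulVec, ← hc2.eq, ← Matrix.mulVec_mulVec, hq]
    apply exp_mulVec_eigenvector
    rw [Matrix.smul_mulVec, hyeig, ← smul_assoc, Complex.real_smul]
  -- contradiction
  rw [show (fun t : ℝ => ((Polynomial.aeval A q) *ᵥ (NormedSpace.exp (t • A) *ᵥ x)) i)
      = fun t : ℝ => Complex.exp ((t : ℂ) * μ) * y i by
    funext t; rw [hkey t]; simp] at htend
  have hlt : ∀ᶠ t : ℝ in atTop, ‖Complex.exp ((t : ℂ) * μ) * y i‖ < ‖y i‖ := by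
    have hpos : 0 < ‖y i‖ := norm_pos_iff.mpr hyi
    exact (NormedAddCommGroup.tendsto_nhds_zero.mp htend) _ hpos
  have hge : ∀ᶠ t : ℝ in atTop, ‖y i‖ ≤ ‖Complex.exp ((t : ℂ) * μ) * y i‖ := by
    filter_upwards [eventually_ge_atTop (0 : ℝ)] with t ht
    rw [norm_mul, Complex.norm_exp]
    have : ((t : ℂ) * μ).re = t * μ.re := by simp [Complex.mul_re]
    rw [this]
    nlinarith [Real.one_le_exp (mul_nonneg ht hμre), norm_nonneg (y i)]
  obtain ⟨t, h1, h2⟩ := (hlt.and hge).exists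
  exact absurd h1 (not_lt.mpr h2)
end
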